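/- Let γ > 1, p(v) = v^{-γ}, H(v) = v^{1-γ}/(γ-1), and fix v₋ > 0. There exist c > 0 and δ* > 0 such that for all 0 < δ < δ* and all v, w > 0 with |p(v) - p(w)| < δ and |p(w) - p(v₋)| < δ, one has H(v|w) ≤ (p(w)^{-1/γ - 1}/(2γ) + cδ) |p(v) - p(w)|². -/

import Mathlib

open Set

lemma rpow_lip {e a : ℝ} (he : e < 0) (ha : 0 < a) :
    ∀ s r : ℝ, a ≤ s → a ≤ r → |s ^ e - r ^ e| ≤ (-e) * a ^ (e - 1) * |s - r| := by
  have key : ∀ s r : ℝ, a ≤ s → a ≤ r → r < s →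
      |s ^ e - r ^ e| ≤ (-e) * a ^ (e - 1) * |s - r| := by
    intro s r hs hr hrs
    obtain ⟨ξ, hξ, hsl⟩ := exists_hasDerivAt_eq_slope (fun t => t ^ e)
      (fun t => e * t ^ (e - 1)) hrs
      (fun t ht => by
        have ht0 : (0:ℝ) < t := lt_of_lt_of_le ha (le_trans hr ht.1)
        exact (Real.hasDerivAt_rpow_const (p := e)
          (Or.inl ht0.ne')).continuousAt.continuousWithinAt)
      (fun t ht => by
        have ht0 : (0:ℝ) < t := lt_of_lt_of_le ha (le_trans hr ht.1.le)
        exact Real.hasDerivAt_rpow_const (p := e) (Or.inl ht0.ne'))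
    have hξa : a ≤ ξ := le_trans hr hξ.1.le
    have hξ0 : 0 < ξ := lt_of_lt_of_le ha hξa
    have hsne : s - r ≠ 0 := sub_ne_zero.2 (ne_of_gt hrs)
    have heq : s ^ e - r ^ e = e * ξ ^ (e - 1) * (s - r) := ((div_eq_iff hsne).mp hsl.symm)
    rw [heq, abs_mul, abs_mul, abs_of_neg he, abs_of_pos (Real.rpow_pos_of_pos hξ0 _)]
    have hb : ξ ^ (e - 1) ≤ a ^ (e - 1) :=
      Real.rpow_le_rpow_of_nonpos ha hξa (by linarith)
    have h2 : (0:ℝ) ≤ -e := by linarith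
    exact mul_le_mul_of_nonneg_right (mul_le_mul_of_nonneg_left hb h2) (abs_nonneg _)
  intro s r hs hr
  rcases lt_trichotomy r s with h | h | h
  · exact key s r hs hr h
  · simp [h]
  · rw [abs_sub_comm (s ^ e), abs_sub_comm s]
    exact key r s hr hs h

lemma taylor2 {f f' f'' : ℝ → ℝ} {lo hi K r q : ℝ}
    (hd : ∀ s ∈ Icc lo hi, HasDerivAt f (f' s) s)
    (hd' : ∀ s ∈ Icc lo hi, HasDerivAt f' (f'' s) s)
    (hK : ∀ s ∈ Icc lo hi, f'' s ≤ K)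
    (hr : r ∈ Icc lo hi) (hq : q ∈ Icc lo hi) :
    f q - f r - f' r * (q - r) ≤ K * (q - r) ^ 2 / 2 := by
  set g : ℝ → ℝ := fun s => f' s - f' r - K * (s - r) with hg
  set φ : ℝ → ℝ := fun t => f t - f' r * t - K * (t - r) ^ 2 / 2 with hφ
  have hφd : ∀ s ∈ Icc lo hi, HasDerivAt φ (g s) s := by
    intro s hs
    have h1 : HasDerivAt (fun t : ℝ => f' r * t) (f' r) s := by
      simpa using (hasDerivAt_id s).const_mul (f' r)
    have h2 : HasDerivAt (fun t : ℝ => K * (t - r) ^ 2 / 2)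
        (K * ((2:ℕ) * (s - r) ^ (2 - 1) * 1) / 2) s :=
      ((((hasDerivAt_id s).sub_const r).pow 2).const_mul K).div_const 2
    have h2e : K * ((2:ℕ) * (s - r) ^ (2 - 1) * 1) / 2 = K * (s - r) := by
      push_cast; ring
    rw [h2e] at h2
    have h3 := ((hd s hs).sub h1).sub h2
    exact h3
  have hgd : ∀ s ∈ Icc lo hi, HasDerivAt g (f'' s - K) s := by
    intro s hs
    have h2 : HasDerivAt (fun t : ℝ => K * (t - r)) (K * 1) s :=
      ((hasDerivAt_id s).sub_const r).const_mul K
    rw [mul_one] at h2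
    have h3 := ((hd' s hs).sub_const (f' r)).sub h2
    exact h3
  have hganti : AntitoneOn g (Icc lo hi) := by
    apply antitoneOn_of_deriv_nonpos (convex_Icc lo hi)
    · exact fun s hs => (hgd s hs).continuousAt.continuousWithinAt
    · intro s hs
      rw [interior_Icc] at hs
      exact (hgd s (Ioo_subset_Icc_self hs)).differentiableAt.differentiableWithinAt
    · intro s hs
      rw [interior_Icc] at hs
      rw [(hgd s (Ioo_subset_Icc_self hs)).deriv]
      exact sub_nonpos.2 (hK s (Ioo_subset_Icc_self hs))
  have hgr : g r = 0 := by simp [hg]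
  have key : φ q ≤ φ r := by
    rcases le_total r q with hrq | hqr
    · have hsub : Icc r q ⊆ Icc lo hi := Icc_subset_Icc hr.1 hq.2
      have hanti : AntitoneOn φ (Icc r q) := by
        apply antitoneOn_of_deriv_nonpos (convex_Icc r q)
        · exact fun s hs => (hφd s (hsub hs)).continuousAt.continuousWithinAt
        · intro s hs
          rw [interior_Icc] at hs
          exact (hφd s (hsub (Ioo_subset_Icc_self hs))).differentiableAt.differentiableWithinAt
        · intro s hs
          rw [interior_Icc] at hs
          have hs' : s ∈ Icc lo hi := hsub (Ioo_subset_Icc_self hs)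
          rw [(hφd s hs').deriv]
          have := hganti hr hs' hs.1.le
          rw [hgr] at this
          exact this
      exact hanti (left_mem_Icc.2 hrq) (right_mem_Icc.2 hrq) hrq
    · have hsub : Icc q r ⊆ Icc lo hi := Icc_subset_Icc hq.1 hr.2
      have hmono : MonotoneOn φ (Icc q r) := by
        apply monotoneOn_of_deriv_nonneg (convex_Icc q r)
        · exact fun s hs => (hφd s (hsub hs)).continuousAt.continuousWithinAt
        · intro s hs
          rw [interior_Icc] at hs
          exact (hφd s (hsub (Ioo_subset_Icc_self hs))).differentiableAt.differentiableWithinAt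
        · intro s hs
          rw [interior_Icc] at hs
          have hs' : s ∈ Icc lo hi := hsub (Ioo_subset_Icc_self hs)
          rw [(hφd s hs').deriv]
          have := hganti hs' hr hs.2.le
          rw [hgr] at this
          exact this
      exact hmono (left_mem_Icc.2 hqr) (right_mem_Icc.2 hqr) hqr
  have key2 : f q - f' r * q - K * (q - r) ^ 2 / 2 ≤ f r - f' r * r - K * (r - r) ^ 2 / 2 := key
  nlinarith [key2]

/-- For γ > 1, p(v) = v^(-γ), H(v) = v^(1-γ)/(γ-1), vminus > 0, there exist c, δ* > 0
such that for all 0 < δ < δ*, and v, w > 0 with |p(v)-p(w)| < δ, |p(w)-p(vminus)| < δ,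
H(v|w) ≤ (p(w)^(-1/γ-1)/(2γ) + cδ) |p(v)-p(w)|². -/
theorem stmt_5 (γ : ℝ) (hγ : 1 < γ) (vminus : ℝ) (hvminus : 0 < vminus) :
    ∃ c : ℝ, 0 < c ∧ ∃ δs : ℝ, 0 < δs ∧ ∀ δ : ℝ, 0 < δ → δ < δs →
      ∀ v w : ℝ, 0 < v → 0 < w →
        |v ^ (-γ) - w ^ (-γ)| < δ → |w ^ (-γ) - vminus ^ (-γ)| < δ →
        v ^ (1 - γ) / (γ - 1) - w ^ (1 - γ) / (γ - 1) - (-(w ^ (-γ))) * (v - w) ≤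
          ((w ^ (-γ)) ^ (-1 / γ - 1) / (2 * γ) + c * δ) * |v ^ (-γ) - w ^ (-γ)| ^ 2 := by
  have hγ0 : (0:ℝ) < γ := lt_trans one_pos hγ
  have hγne : γ ≠ 0 := ne_of_gt hγ0
  have hγ1ne : γ - 1 ≠ 0 := ne_of_gt (by linarith)
  have hγinv : (0:ℝ) < 1 / γ := by positivity
  set r0 : ℝ := vminus ^ (-γ) with hr0def
  have hr0pos : 0 < r0 := Real.rpow_pos_of_pos hvminus _
  set lo : ℝ := r0 / 2 with hlodef
  set hi : ℝ := 3 * r0 / 2 with hhidef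
  have hlopos : 0 < lo := by positivity
  have hipos : 0 < hi := by positivity
  set M : ℝ := (1 / γ ^ 2) * ((1 / γ + 1) * lo ^ (-1 / γ - 2)) +
      (hi / γ) * (1 / γ + 1) * ((1 / γ + 2) * lo ^ (-1 / γ - 3)) with hMdef
  have P1 : (0:ℝ) < lo ^ (-1 / γ - 2) := Real.rpow_pos_of_pos hlopos _
  have P2 : (0:ℝ) < lo ^ (-1 / γ - 3) := Real.rpow_pos_of_pos hlopos _
  have A1 : (0:ℝ) < 1 / γ ^ 2 := by positivity
  have A2 : (0:ℝ) < 1 / γ + 1 := by linarith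
  have A3 : (0:ℝ) < 1 / γ + 2 := by linarith
  have hMpos : 0 < M := by
    apply add_pos
    · exact mul_pos A1 (mul_pos A2 P1)
    · exact mul_pos (mul_pos (by positivity) A2) (mul_pos A3 P2)
  refine ⟨M / 2, by positivity, r0 / 4, by positivity, ?_⟩
  intro δ hδ0 hδs v w hv hw h1 h2
  set q : ℝ := v ^ (-γ) with hqdef
  set r : ℝ := w ^ (-γ) with hrdef
  have hqpos : 0 < q := Real.rpow_pos_of_pos hv _
  have hrpos : 0 < r := Real.rpow_pos_of_pos hw _
  obtain ⟨h2a, h2b⟩ := abs_sub_lt_iff.mp h2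
  obtain ⟨h1a, h1b⟩ := abs_sub_lt_iff.mp h1
  have hrlo : lo ≤ r := by rw [hlodef]; linarith
  have hrhi : r ≤ hi := by rw [hhidef]; linarith
  have hqlo : lo ≤ q := by rw [hlodef]; linarith
  have hqhi : q ≤ hi := by rw [hhidef]; linarith
  -- the function and its derivatives
  set f : ℝ → ℝ := fun t => t ^ ((γ - 1) / γ) / (γ - 1) + r * t ^ (-1 / γ) with hfdef
  set f1 : ℝ → ℝ := fun t => (1 / γ) * t ^ (-1 / γ) - (r / γ) * t ^ (-1 / γ - 1) with hf1def
  set f2 : ℝ → ℝ := fun t => -(1 / γ ^ 2) * t ^ (-1 / γ - 1) +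
      (r / γ) * (1 / γ + 1) * t ^ (-1 / γ - 2) with hf2def
  have hd : ∀ s ∈ Icc lo hi, HasDerivAt f (f1 s) s := by
    intro s hs
    have hs0 : (0:ℝ) < s := lt_of_lt_of_le hlopos hs.1
    have ha : HasDerivAt (fun t : ℝ => t ^ ((γ - 1) / γ))
        ((γ - 1) / γ * s ^ ((γ - 1) / γ - 1)) s :=
      Real.hasDerivAt_rpow_const (Or.inl hs0.ne')
    have hb : HasDerivAt (fun t : ℝ => t ^ (-1 / γ)) (-1 / γ * s ^ (-1 / γ - 1)) s :=
      Real.hasDerivAt_rpow_const (Or.inl hs0.ne')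
    have hc := (ha.div_const (γ - 1)).add (hb.const_mul r)
    have he : (γ - 1) / γ - 1 = -1 / γ := by field_simp; ring
    rw [he] at hc
    have hval : (γ - 1) / γ * s ^ (-1 / γ) / (γ - 1) + r * (-1 / γ * s ^ (-1 / γ - 1)) = f1 s := by
      simp only [hf1def]
      field_simp
      ring
    rw [hval] at hc
    exact hc
  have hd1 : ∀ s ∈ Icc lo hi, HasDerivAt f1 (f2 s) s := by
    intro s hs
    have hs0 : (0:ℝ) < s := lt_of_lt_of_le hlopos hs.1
    have ha : HasDerivAt (fun t : ℝ => t ^ (-1 / γ)) (-1 / γ * s ^ (-1 / γ - 1)) s :=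
      Real.hasDerivAt_rpow_const (Or.inl hs0.ne')
    have hb : HasDerivAt (fun t : ℝ => t ^ (-1 / γ - 1)) ((-1 / γ - 1) * s ^ (-1 / γ - 1 - 1)) s :=
      Real.hasDerivAt_rpow_const (Or.inl hs0.ne')
    have hc := (ha.const_mul (1 / γ)).sub (hb.const_mul (r / γ))
    have he : -1 / γ - 1 - 1 = -1 / γ - 2 := by ring
    rw [he] at hc
    have hval : 1 / γ * (-1 / γ * s ^ (-1 / γ - 1)) - r / γ * ((-1 / γ - 1) * s ^ (-1 / γ - 2))
        = f2 s := by
      simp only [hf2def]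
      field_simp
      ring
    rw [hval] at hc
    exact hc
  -- values at r
  have hkey1 : r ^ (-1 / γ) = r * r ^ (-1 / γ - 1) := by
    have h := Real.rpow_add hrpos 1 (-1 / γ - 1)
    have he : (1:ℝ) + (-1 / γ - 1) = -1 / γ := by ring
    rw [he, Real.rpow_one] at h
    exact h
  have hkey2 : r ^ (-1 / γ - 1) = r * r ^ (-1 / γ - 2) := by
    have h := Real.rpow_add hrpos 1 (-1 / γ - 2)
    have he : (1:ℝ) + (-1 / γ - 2) = -1 / γ - 1 := by ring
    rw [he, Real.rpow_one] at h
    exact h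
  have hf1r : f1 r = 0 := by
    simp only [hf1def]
    rw [hkey1]; ring
  have hf2r : f2 r = r ^ (-1 / γ - 1) / γ := by
    simp only [hf2def]
    rw [hkey2]; ring
  -- Lipschitz bound on f2 between q and r
  set mn : ℝ := min q r with hmndef
  set mx : ℝ := max q r with hmxdef
  have hsub : Icc mn mx ⊆ Icc lo hi :=
    Icc_subset_Icc (le_min hqlo hrlo) (max_le hqhi hrhi)
  have hK : ∀ s ∈ Icc mn mx, f2 s ≤ f2 r + M * δ := by
    intro s hs
    have hs' := hsub hs
    have hslo : lo ≤ s := hs'.1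
    have hsr : |s - r| ≤ δ := by
      rcases le_total q r with h | h
      · have e1 : mn = q := min_eq_left h
        have e2 : mx = r := max_eq_right h
        rw [e1] at hs; rw [e2] at hs
        rw [abs_le]
        constructor <;> linarith [hs.1, hs.2]
      · have e1 : mn = r := min_eq_right h
        have e2 : mx = q := max_eq_left h
        rw [e1] at hs; rw [e2] at hs
        rw [abs_le]
        constructor <;> linarith [hs.1, hs.2]
    have hee : (-1 / γ : ℝ) = -(1 / γ) := by ring
    have he1 : (-1 / γ - 1 : ℝ) < 0 := by rw [hee]; linarith
    have he2 : (-1 / γ - 2 : ℝ) < 0 := by rw [hee]; linarith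
    have lip1 : |s ^ (-1 / γ - 1) - r ^ (-1 / γ - 1)| ≤ (1 / γ + 1) * lo ^ (-1 / γ - 2) * δ := by
      have h := rpow_lip he1 hlopos s r hslo hrlo
      have he : (-(-1 / γ - 1) : ℝ) * lo ^ (-1 / γ - 1 - 1)
          = (1 / γ + 1) * lo ^ (-1 / γ - 2) := by
        rw [show (-1 / γ - 1 - 1 : ℝ) = -1 / γ - 2 by ring]; ring
      rw [he] at h
      calc |s ^ (-1 / γ - 1) - r ^ (-1 / γ - 1)| ≤ (1 / γ + 1) * lo ^ (-1 / γ - 2) * |s - r| := h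
        _ ≤ (1 / γ + 1) * lo ^ (-1 / γ - 2) * δ := by
            apply mul_le_mul_of_nonneg_left hsr (by positivity)
    have lip2 : |s ^ (-1 / γ - 2) - r ^ (-1 / γ - 2)| ≤ (1 / γ + 2) * lo ^ (-1 / γ - 3) * δ := by
      have h := rpow_lip he2 hlopos s r hslo hrlo
      have he : (-(-1 / γ - 2) : ℝ) * lo ^ (-1 / γ - 2 - 1)
          = (1 / γ + 2) * lo ^ (-1 / γ - 3) := by
        rw [show (-1 / γ - 2 - 1 : ℝ) = -1 / γ - 3 by ring]; ring
      rw [he] at h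
      calc |s ^ (-1 / γ - 2) - r ^ (-1 / γ - 2)| ≤ (1 / γ + 2) * lo ^ (-1 / γ - 3) * |s - r| := h
        _ ≤ (1 / γ + 2) * lo ^ (-1 / γ - 3) * δ := by
            apply mul_le_mul_of_nonneg_left hsr (by positivity)
    have expand : f2 s - f2 r = -(1 / γ ^ 2) * (s ^ (-1 / γ - 1) - r ^ (-1 / γ - 1)) +
        (r / γ) * (1 / γ + 1) * (s ^ (-1 / γ - 2) - r ^ (-1 / γ - 2)) := by
      simp only [hf2def]; ring
    have b1 : -(1 / γ ^ 2) * (s ^ (-1 / γ - 1) - r ^ (-1 / γ - 1)) ≤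
        (1 / γ ^ 2) * ((1 / γ + 1) * lo ^ (-1 / γ - 2) * δ) := by
      calc -(1 / γ ^ 2) * (s ^ (-1 / γ - 1) - r ^ (-1 / γ - 1))
          = (1 / γ ^ 2) * (-(s ^ (-1 / γ - 1) - r ^ (-1 / γ - 1))) := by ring
        _ ≤ (1 / γ ^ 2) * |s ^ (-1 / γ - 1) - r ^ (-1 / γ - 1)| :=
            mul_le_mul_of_nonneg_left (neg_le_abs _) A1.le
        _ ≤ (1 / γ ^ 2) * ((1 / γ + 1) * lo ^ (-1 / γ - 2) * δ) :=
            mul_le_mul_of_nonneg_left lip1 A1.le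
    have b2 : (r / γ) * (1 / γ + 1) * (s ^ (-1 / γ - 2) - r ^ (-1 / γ - 2)) ≤
        (hi / γ) * (1 / γ + 1) * ((1 / γ + 2) * lo ^ (-1 / γ - 3) * δ) := by
      have hc0 : (0:ℝ) ≤ (r / γ) * (1 / γ + 1) := by positivity
      calc (r / γ) * (1 / γ + 1) * (s ^ (-1 / γ - 2) - r ^ (-1 / γ - 2))
          ≤ (r / γ) * (1 / γ + 1) * ((1 / γ + 2) * lo ^ (-1 / γ - 3) * δ) :=
            mul_le_mul_of_nonneg_left (le_trans (le_abs_self _) lip2) hc0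
        _ ≤ (hi / γ) * (1 / γ + 1) * ((1 / γ + 2) * lo ^ (-1 / γ - 3) * δ) := by
            have hcc : (r / γ) * (1 / γ + 1) ≤ (hi / γ) * (1 / γ + 1) := by
              exact mul_le_mul_of_nonneg_right ((div_le_div_iff_of_pos_right hγ0).mpr hrhi) A2.le
            exact mul_le_mul_of_nonneg_right hcc (by positivity)
    have hMδ : (1 / γ ^ 2) * ((1 / γ + 1) * lo ^ (-1 / γ - 2) * δ) +
        (hi / γ) * (1 / γ + 1) * ((1 / γ + 2) * lo ^ (-1 / γ - 3) * δ) = M * δ := by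
      simp only [hMdef]; ring
    have hfinal : f2 s - f2 r ≤ M * δ := by
      calc f2 s - f2 r = -(1 / γ ^ 2) * (s ^ (-1 / γ - 1) - r ^ (-1 / γ - 1)) +
            (r / γ) * (1 / γ + 1) * (s ^ (-1 / γ - 2) - r ^ (-1 / γ - 2)) := expand
        _ ≤ (1 / γ ^ 2) * ((1 / γ + 1) * lo ^ (-1 / γ - 2) * δ) +
            (hi / γ) * (1 / γ + 1) * ((1 / γ + 2) * lo ^ (-1 / γ - 3) * δ) := add_le_add b1 b2
        _ = M * δ := hMδ
    linarith [hfinal]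
  -- apply Taylor
  have hrm : r ∈ Icc mn mx := ⟨min_le_right q r, le_max_right q r⟩
  have hqm : q ∈ Icc mn mx := ⟨min_le_left q r, le_max_left q r⟩
  have main := taylor2 (fun s hs => hd s (hsub hs)) (fun s hs => hd1 s (hsub hs)) hK hrm hqm
  rw [hf1r, zero_mul, sub_zero] at main
  -- translate back
  have e1 : q ^ ((γ - 1) / γ) = v ^ (1 - γ) := by
    rw [hqdef, ← Real.rpow_mul hv.le]
    congr 1
    field_simp
    ring
  have e2 : q ^ (-1 / γ) = v := by
    rw [hqdef, ← Real.rpow_mul hv.le]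
    rw [show -γ * (-1 / γ) = 1 by field_simp, Real.rpow_one]
  have e3 : r ^ ((γ - 1) / γ) = w ^ (1 - γ) := by
    rw [hrdef, ← Real.rpow_mul hw.le]
    congr 1
    field_simp
    ring
  have e4 : r ^ (-1 / γ) = w := by
    rw [hrdef, ← Real.rpow_mul hw.le]
    rw [show -γ * (-1 / γ) = 1 by field_simp, Real.rpow_one]
  calc v ^ (1 - γ) / (γ - 1) - w ^ (1 - γ) / (γ - 1) - -r * (v - w)
      = f q - f r := by
        simp only [hfdef]
        rw [e1, e2, e3, e4]
        ring
    _ ≤ (f2 r + M * δ) * (q - r) ^ 2 / 2 := main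
    _ = (r ^ (-1 / γ - 1) / (2 * γ) + M / 2 * δ) * |q - r| ^ 2 := by
        rw [hf2r, sq_abs]
        field_simp
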